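/- A ½-Hölder curve whose dyadic approximations all have zero area but whose signed area does not exist: there exist a constant C > 0 and a continuous curve γ : [0,1] → ℝ² with |γ(s) − γ(t)| ≤ C √|s − t| for all s, t ∈ [0,1], such that A_{𝒫_k}(γ) = 0 for every integer k ≥ 0, and yet the signed area A(γ) does not exist, i.e., there is no L ∈ ℝ such that for every ε > 0 there is δ > 0 with |A_P(γ) − L| < ε for all partitions P of mesh less than δ. -/

import Mathlib

open MeasureTheory Set Filter Topology
open scoped ENNReal

noncomputable section

/-- Euclidean space `ℝ^(2n)`. -/
abbrev E (n : ℕ) : Type := EuclideanSpace ℝ (Fin (2 * n))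

/-- The standard symplectic form on `ℝ^(2n)` with coordinates `(x₁,y₁,…,xₙ,yₙ)`. -/
def omegaF (n : ℕ) (u v : E n) : ℝ :=
  ∑ i : Fin n,
    (u ⟨2 * i.1, by have := i.isLt; omega⟩ * v ⟨2 * i.1 + 1, by have := i.isLt; omega⟩
     - v ⟨2 * i.1, by have := i.isLt; omega⟩ * u ⟨2 * i.1 + 1, by have := i.isLt; omega⟩)

/-- The discrete symplectic area `Ŝ(γ_P)` of `γ` along the partition
`t 0 < t 1 < … < t k`:  `½ ∑_i ω(γ(t_i), γ(t_{i+1}))`, which coincides with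
`½ ∑_i ∑_j (x_j(γ(t_i)) y_j(γ(t_{i+1})) − y_j(γ(t_i)) x_j(γ(t_{i+1})))`. -/
def SHat (n : ℕ) (γ : ℝ → E n) (k : ℕ) (t : Fin (k + 1) → ℝ) : ℝ :=
  (1 / 2) * ∑ i : Fin k, omegaF n (γ (t i.castSucc)) (γ (t i.succ))

/-- The symplectic area of `γ : [a,b] → ℝ^(2n)` exists and equals `L`: for every `ε > 0`
there is `δ > 0` such that every partition `a = t₀ < … < t_k = b` of mesh `< δ` satisfies
`|Ŝ(γ_P) − L| < ε`. -/
def IsSympArea (n : ℕ) (a b : ℝ) (γ : ℝ → E n) (L : ℝ) : Prop :=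
  ∀ ε > (0 : ℝ), ∃ δ > (0 : ℝ), ∀ (k : ℕ) (t : Fin (k + 1) → ℝ),
    t 0 = a → t (Fin.last k) = b →
    (∀ i : Fin k, t i.castSucc < t i.succ) →
    (∀ i : Fin k, t i.succ - t i.castSucc < δ) →
    |SHat n γ k t - L| < ε

/-- `δ_{i,j}(γ)`: the diameter of `{γ(j 2^{-i}), γ((2j+1) 2^{-i-1}), γ((j+1) 2^{-i})}`. -/
def dyadDelta (n : ℕ) (γ : ℝ → E n) (i j : ℕ) : ℝ :=
  Metric.diam
    ({γ ((j : ℝ) / 2 ^ i), γ ((2 * (j : ℝ) + 1) / 2 ^ (i + 1)), γ (((j : ℝ) + 1) / 2 ^ i)} :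
      Set (E n))


/-- The discrete signed area `A_{𝒫_i}(γ)` of `γ : [0,1] → ℝ²` along the `i`-th dyadic
partition `𝒫_i = {j 2^{-i} : 0 ≤ j ≤ 2^i}`. -/
def dyadArea (γ : ℝ → E 1) (i : ℕ) : ℝ :=
  (1 / 2) * ∑ j ∈ Finset.range (2 ^ i),
    omegaF 1 (γ ((j : ℝ) / 2 ^ i)) (γ (((j : ℝ) + 1) / 2 ^ i))

namespace HH
open Complex Finset


def ee (x : ℝ) : ℂ := Complex.exp ((2 * Real.pi * x : ℝ) * Complex.I)

lemma ee_zero : ee 0 = 1 := by simp [ee]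

lemma ee_add (x y : ℝ) : ee (x + y) = ee x * ee y := by
  rw [ee, ee, ee, ← Complex.exp_add]
  congr 1
  push_cast
  ring

lemma ee_int (n : ℤ) : ee n = 1 := by
  rw [ee]
  have : ((2 * Real.pi * (n:ℝ) : ℝ) : ℂ) * Complex.I = (n : ℂ) * (2 * Real.pi * Complex.I) := by
    push_cast; ring
  rw [this, Complex.exp_int_mul_two_pi_mul_I]

lemma ee_nat (n : ℕ) : ee n = 1 := by exact_mod_cast ee_int n

lemma abs_ee (x : ℝ) : ‖ee x‖ = 1 := Complex.norm_exp_ofReal_mul_I _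

lemma ee_pow (x : ℝ) (n : ℕ) : ee x ^ n = ee (n * x) := by
  rw [ee, ee, ← Complex.exp_nat_mul]
  congr 1
  push_cast
  ring

lemma ee_conj (x : ℝ) : (starRingEnd ℂ) (ee x) = ee (-x) := by
  rw [ee, ee, ← Complex.exp_conj]
  have : ((2 * Real.pi * x : ℝ) : ℂ) * Complex.I = (2 * Real.pi * x : ℝ) * Complex.I := rfl
  rw [map_mul, Complex.conj_ofReal, Complex.conj_I]
  push_cast
  ring

lemma ee_re (x : ℝ) : (ee x).re = Real.cos (2 * Real.pi * x) := Complex.exp_ofReal_mul_I_re _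
lemma ee_im (x : ℝ) : (ee x).im = Real.sin (2 * Real.pi * x) := Complex.exp_ofReal_mul_I_im _

lemma abs_ee_sub_one (x : ℝ) : ‖ee x - 1‖ ≤ 2 * Real.pi * |x| := by
  have h1 : ‖ee x - 1‖ = Real.sqrt ((Real.cos (2*Real.pi*x) - 1)^2 + (Real.sin (2*Real.pi*x))^2) := by
    rw [Complex.norm_def, Complex.normSq_apply]
    simp [Complex.sub_re, Complex.sub_im, ee_re, ee_im]
    ring_nf
  rw [h1]
  have key : (Real.cos (2*Real.pi*x) - 1)^2 + (Real.sin (2*Real.pi*x))^2 = 2 - 2 * Real.cos (2*Real.pi*x) := by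
    have := Real.sin_sq_add_cos_sq (2*Real.pi*x)
    nlinarith
  rw [key]
  have hc := Real.one_sub_sq_div_two_le_cos (x := 2*Real.pi*x)
  have h2 : 2 - 2 * Real.cos (2*Real.pi*x) ≤ (2*Real.pi*x)^2 := by nlinarith
  calc Real.sqrt (2 - 2 * Real.cos (2*Real.pi*x)) ≤ Real.sqrt ((2*Real.pi*x)^2) := Real.sqrt_le_sqrt h2
    _ = |2*Real.pi*x| := Real.sqrt_sq_eq_abs _
    _ = 2 * Real.pi * |x| := by
        rw [abs_mul, _root_.abs_of_nonneg (by positivity : (0:ℝ) ≤ 2*Real.pi)]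

lemma abs_ee_sub_ee (x y : ℝ) : ‖ee x - ee y‖ ≤ 2 * Real.pi * |x - y| := by
  have : ee x - ee y = ee y * (ee (x - y) - 1) := by
    rw [mul_sub, mul_one, ← ee_add]; ring_nf
  rw [this, norm_mul, abs_ee, one_mul]
  exact abs_ee_sub_one _

lemma abs_ee_sub_one_le_two (x : ℝ) : ‖ee x - 1‖ ≤ 2 := by
  calc ‖ee x - 1‖ ≤ ‖ee x‖ + ‖(1:ℂ)‖ := norm_sub_le _ _
    _ = 2 := by rw [abs_ee, norm_one]; norm_num



/-- term of the lacunary series -/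
def trm (k : ℕ) (t : ℝ) : ℂ := ((1/2 : ℝ)^k : ℝ) * (ee ((4:ℝ)^k * t) - 1)

def fC (t : ℝ) : ℂ := ∑' k : ℕ, trm k t





lemma norm_trm (k : ℕ) (t : ℝ) : ‖trm k t‖ ≤ 2 * (1/2:ℝ)^k := by
  rw [trm]
  rw [norm_mul]
  have h1 : ‖(((1/2:ℝ)^k : ℝ) : ℂ)‖ = (1/2:ℝ)^k := by
    rw [Complex.norm_real, Real.norm_eq_abs, _root_.abs_of_nonneg (by positivity)]
  rw [h1]
  have := abs_ee_sub_one_le_two ((4:ℝ)^k * t)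
  nlinarith [pow_nonneg (by norm_num : (0:ℝ) ≤ 1/2) k]

lemma summable_trm (t : ℝ) : Summable (fun k => trm k t) := by
  apply Summable.of_norm_bounded (g := fun k => 2 * (1/2:ℝ)^k)
  · exact (summable_geometric_of_lt_one (by norm_num) (by norm_num)).mul_left 2
  · exact fun k => norm_trm k t

lemma trm_eq_zero_of_int (k : ℕ) (t : ℝ) (h : ∃ n : ℕ, (4:ℝ)^k * t = n) : trm k t = 0 := by
  obtain ⟨n, hn⟩ := h
  rw [trm, hn, ee_nat, sub_self, mul_zero]

/-- value at a dyadic point of level m : only the first ⌈m/2⌉ terms survive -/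
lemma fC_dyadic (m j : ℕ) :
    fC ((j:ℝ) / 2^m) = ∑ k ∈ range ((m+1)/2), trm k ((j:ℝ)/2^m) := by
  apply tsum_eq_sum
  intro k hk
  apply trm_eq_zero_of_int
  have hk' : m ≤ 2 * k := by
    simp only [Finset.mem_range, not_lt] at hk
    omega
  refine ⟨j * 2^(2*k - m), ?_⟩
  have h4 : (4:ℝ)^k = 2^(2*k) := by
    rw [show (4:ℝ) = 2^2 by norm_num, ← pow_mul]
  rw [h4]
  have h2 : (2:ℝ)^(2*k) = 2^m * 2^(2*k - m) := by
    rw [← pow_add]; congr 1; omega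
  push_cast
  rw [h2]
  field_simp

lemma fC_nat (n : ℕ) : fC n = 0 := by
  have : ∀ k, trm k (n:ℝ) = 0 := by
    intro k
    apply trm_eq_zero_of_int
    exact ⟨4^k * n, by push_cast; ring⟩
  rw [fC]
  simp [this]

lemma fC_one : fC 1 = 0 := by exact_mod_cast fC_nat 1
lemma fC_zero : fC 0 = 0 := by exact_mod_cast fC_nat 0

lemma norm_fC_le (t : ℝ) : ‖fC t‖ ≤ 4 := by
  have h1 : ‖fC t‖ ≤ ∑' k, ‖trm k t‖ := norm_tsum_le_tsum_norm ((summable_trm t).norm)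
  have h2 : ∑' k, ‖trm k t‖ ≤ ∑' k : ℕ, 2 * (1/2:ℝ)^k := by
    apply Summable.tsum_le_tsum (fun k => norm_trm k t) ((summable_trm t).norm)
    exact (summable_geometric_of_lt_one (by norm_num) (by norm_num)).mul_left 2
  have h3 : ∑' k : ℕ, 2 * (1/2:ℝ)^k = 4 := by
    rw [tsum_mul_left, tsum_geometric_of_lt_one (by norm_num) (by norm_num)]
    norm_num
  linarith

/-- Hölder estimate for `fC` with constant 17. -/
lemma fC_holder (s t : ℝ) : ‖fC s - fC t‖ ≤ 21 * Real.sqrt |s - t| := by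
  rcases eq_or_ne s t with rfl | hst
  · simp
  set h := |s - t| with hh
  have hpos : 0 < h := abs_pos.mpr (sub_ne_zero.mpr hst)
  have hs : 0 < Real.sqrt h := Real.sqrt_pos.mpr hpos
  rcases le_or_gt 1 h with hbig | hsmall
  · have : ‖fC s - fC t‖ ≤ 8 := by
      calc ‖fC s - fC t‖ ≤ ‖fC s‖ + ‖fC t‖ := norm_sub_le _ _
        _ ≤ 8 := by linarith [norm_fC_le s, norm_fC_le t]
    have : (1:ℝ) ≤ Real.sqrt h := by
      rw [show (1:ℝ) = Real.sqrt 1 by simp]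
      exact Real.sqrt_le_sqrt hbig
    nlinarith
  · -- h < 1
    -- find minimal K with (1/2)^K ≤ √h
    have hex : ∃ K : ℕ, (1/2:ℝ)^K ≤ Real.sqrt h := by
      obtain ⟨K, hK⟩ := exists_pow_lt_of_lt_one hs (by norm_num : (1/2:ℝ) < 1)
      exact ⟨K, hK.le⟩
    classical
    obtain ⟨K, hK, hKmin'⟩ : ∃ K : ℕ, (1/2:ℝ)^K ≤ Real.sqrt h ∧
        ∀ m, m < K → Real.sqrt h < (1/2:ℝ)^m :=
      ⟨Nat.find hex, Nat.find_spec hex, fun m hm => not_le.mp (Nat.find_min hex hm)⟩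
    have hroot1 : Real.sqrt h < 1 := by
      rw [show (1:ℝ) = Real.sqrt 1 by simp]
      exact Real.sqrt_lt_sqrt hpos.le hsmall
    have hKpos : K ≠ 0 := by
      intro h0
      rw [h0, pow_zero] at hK
      linarith
    obtain ⟨K', rfl⟩ : ∃ K', K = K' + 1 := ⟨K - 1, by omega⟩
    have hKmin : Real.sqrt h < (1/2:ℝ)^K' := hKmin' K' (by omega)
    have hKmin2 : Real.sqrt h < 2 * (1/2:ℝ)^(K'+1) := by
      rw [pow_succ]; linarith
    set K := K' + 1 with hKK
    -- split the series
    have hsum : Summable (fun k => trm k s - trm k t) := (summable_trm s).sub (summable_trm t)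
    have h0 : fC s - fC t = ∑' k, (trm k s - trm k t) :=
      (Summable.tsum_sub (summable_trm s) (summable_trm t)).symm
    have hDs : Summable (fun k => ‖trm k s - trm k t‖) := hsum.norm
    have hn : ‖fC s - fC t‖ ≤ ∑' k, ‖trm k s - trm k t‖ := by
      rw [h0]; exact norm_tsum_le_tsum_norm hDs
    have hsplit : ∑' k, ‖trm k s - trm k t‖
        = ∑ i ∈ Finset.range K, ‖trm i s - trm i t‖ + ∑' i : ℕ, ‖trm (i+K) s - trm (i+K) t‖ :=
      (Summable.sum_add_tsum_nat_add K hDs).symm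
    -- termwise bounds
    have hD1 : ∀ k, ‖trm k s - trm k t‖ ≤ 2 * Real.pi * 2^k * h := by
      intro k
      have : trm k s - trm k t = (((1/2:ℝ)^k : ℝ) : ℂ) * (ee ((4:ℝ)^k * s) - ee ((4:ℝ)^k * t)) := by
        rw [trm, trm]; ring
      rw [this, norm_mul, Complex.norm_real, Real.norm_eq_abs,
        _root_.abs_of_nonneg (by positivity : (0:ℝ) ≤ (1/2:ℝ)^k)]
      have h2 := abs_ee_sub_ee ((4:ℝ)^k * s) ((4:ℝ)^k * t)
      have h3 : |(4:ℝ)^k * s - (4:ℝ)^k * t| = (4:ℝ)^k * h := by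
        rw [← mul_sub, abs_mul, _root_.abs_of_nonneg (by positivity : (0:ℝ) ≤ (4:ℝ)^k), hh]
      have h4 : (1/2:ℝ)^k * ((4:ℝ)^k) = 2^k := by
        rw [← mul_pow]; norm_num
      calc (1/2:ℝ)^k * ‖ee ((4:ℝ)^k * s) - ee ((4:ℝ)^k * t)‖
          ≤ (1/2:ℝ)^k * (2 * Real.pi * ((4:ℝ)^k * h)) := by
            rw [← h3]
            exact mul_le_mul_of_nonneg_left h2 (by positivity)
        _ = 2 * Real.pi * 2^k * h := by rw [← h4]; ring
    have hD2 : ∀ k, ‖trm k s - trm k t‖ ≤ 4 * (1/2:ℝ)^k := by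
      intro k
      calc ‖trm k s - trm k t‖ ≤ ‖trm k s‖ + ‖trm k t‖ := norm_sub_le _ _
        _ ≤ 4 * (1/2:ℝ)^k := by linarith [norm_trm k s, norm_trm k t]
    -- finite part
    have hfin : ∑ i ∈ Finset.range K, ‖trm i s - trm i t‖ ≤ 2 * Real.pi * h * 2^K := by
      calc ∑ i ∈ Finset.range K, ‖trm i s - trm i t‖
          ≤ ∑ i ∈ Finset.range K, 2 * Real.pi * 2^i * h :=
            Finset.sum_le_sum (fun i _ => hD1 i)
        _ = 2 * Real.pi * h * ∑ i ∈ Finset.range K, (2:ℝ)^i := by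
            rw [Finset.mul_sum]; congr 1; ext i; ring
        _ ≤ 2 * Real.pi * h * 2^K := by
            have : ∑ i ∈ Finset.range K, (2:ℝ)^i = 2^K - 1 := by
              have := geom_sum_eq (by norm_num : (2:ℝ) ≠ 1) K
              rw [this]; norm_num
            rw [this]
            have : (0:ℝ) ≤ 2 * Real.pi * h := by positivity
            nlinarith
    -- tail part
    have htailsummable : Summable (fun i : ℕ => 4 * (1/2:ℝ)^(i+K)) := by
      apply Summable.mul_left
      exact (summable_geometric_of_lt_one (by norm_num) (by norm_num)).comp_injective
        (add_left_injective K)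
    have htail : ∑' i : ℕ, ‖trm (i+K) s - trm (i+K) t‖ ≤ 8 * (1/2:ℝ)^K := by
      calc ∑' i : ℕ, ‖trm (i+K) s - trm (i+K) t‖
          ≤ ∑' i : ℕ, 4 * (1/2:ℝ)^(i+K) := by
            apply Summable.tsum_le_tsum (fun i => hD2 (i+K)) _ htailsummable
            exact hDs.comp_injective (add_left_injective K)
        _ = 8 * (1/2:ℝ)^K := by
            have : ∀ i : ℕ, 4 * (1/2:ℝ)^(i+K) = (4 * (1/2:ℝ)^K) * (1/2:ℝ)^i := by
              intro i; rw [pow_add]; ring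
            rw [tsum_congr this, tsum_mul_left,
              tsum_geometric_of_lt_one (by norm_num) (by norm_num)]
            norm_num
            ring
    -- combine
    have hh2K : h * 2^K ≤ 2 * Real.sqrt h := by
      have hsq : Real.sqrt h * Real.sqrt h = h := Real.mul_self_sqrt hpos.le
      have hpow : (1/2:ℝ)^K = ((2:ℝ)^K)⁻¹ := by
        rw [one_div, inv_pow]
      have h2Kpos : (0:ℝ) < 2^K := by positivity
      have := hKmin2
      rw [hpow] at this
      -- √h < 2 / 2^K  ⇒  √h * 2^K < 2
      have h5 : Real.sqrt h * 2^K < 2 := by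
        have := mul_lt_mul_of_pos_right this h2Kpos
        rw [mul_assoc, inv_mul_cancel₀ (ne_of_gt h2Kpos), mul_one] at this
        linarith
      calc h * 2^K = Real.sqrt h * (Real.sqrt h * 2^K) := by rw [← mul_assoc, hsq]
        _ ≤ Real.sqrt h * 2 := by
            apply mul_le_mul_of_nonneg_left h5.le hs.le
        _ = 2 * Real.sqrt h := by ring
    have hpi : Real.pi ≤ 3.2 := by linarith [Real.pi_lt_d2]
    calc ‖fC s - fC t‖ ≤ ∑ i ∈ Finset.range K, ‖trm i s - trm i t‖
          + ∑' i : ℕ, ‖trm (i+K) s - trm (i+K) t‖ := by rw [← hsplit]; exact hn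
      _ ≤ 2 * Real.pi * h * 2^K + 8 * (1/2:ℝ)^K := by linarith
      _ ≤ 2 * Real.pi * (2 * Real.sqrt h) + 8 * Real.sqrt h := by
          have h6 : 2 * Real.pi * (h * 2^K) ≤ 2 * Real.pi * (2 * Real.sqrt h) :=
            mul_le_mul_of_nonneg_left hh2K (by positivity)
          have h7 : 8 * (1/2:ℝ)^K ≤ 8 * Real.sqrt h := by linarith
          calc 2 * Real.pi * h * 2^K + 8 * (1/2:ℝ)^K
              = 2 * Real.pi * (h * 2^K) + 8 * (1/2:ℝ)^K := by ring
            _ ≤ 2 * Real.pi * (2 * Real.sqrt h) + 8 * Real.sqrt h := by linarith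
      _ ≤ 21 * Real.sqrt h := by nlinarith [hs.le]






def toE (p : ℂ) : E 1 := WithLp.toLp 2 (fun i => if (i:ℕ) = 0 then p.re else p.im)

def w (u v : ℂ) : ℝ := ((starRingEnd ℂ) u * v).im

lemma w_neg_neg (u v : ℂ) : w (-u) (-v) = w u v := by simp [w]

lemma w_antisymm (u v : ℂ) : w u v = - w v u := by
  simp [w, Complex.mul_im]
  ring

lemma omega_toE (p q : ℂ) : omegaF 1 (toE p) (toE q) = w p q := by
  simp [omegaF, toE, w, Fin.sum_univ_one, Complex.mul_im]
  ring

lemma toE_sub (p q : ℂ) : toE p - toE q = toE (p - q) := by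
  ext i
  rcases i with ⟨iv, hi⟩
  simp [toE]
  split <;> simp [PiLp.sub_apply, toE]

lemma norm_toE (p : ℂ) : ‖toE p‖ = ‖p‖ := by
  rw [EuclideanSpace.norm_eq]
  rw [Complex.norm_def, Complex.normSq_apply]
  congr 1
  have h2 : (∑ i : Fin (2*1), ‖toE p i‖^2) = ∑ i : Fin 2, ‖toE p i‖^2 := rfl
  rw [h2, Fin.sum_univ_two]
  have e0 : toE p (0 : Fin 2) = p.re := by simp [toE]
  have e1 : toE p (1 : Fin 2) = p.im := by simp [toE]
  rw [e0, e1, Real.norm_eq_abs, Real.norm_eq_abs]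
  rw [_root_.sq_abs, _root_.sq_abs]
  ring

def FF (t : ℝ) : ℂ := if t ≤ 1/2 then fC (2*t) else -fC (2-2*t)

def gam (t : ℝ) : E 1 := toE (FF t)

lemma FF_left {t : ℝ} (h : t ≤ 1/2) : FF t = fC (2*t) := if_pos h

lemma FF_right {t : ℝ} (h : 1/2 ≤ t) : FF t = -fC (2-2*t) := by
  rcases eq_or_lt_of_le h with rfl | h'
  · rw [FF, if_pos le_rfl]
    norm_num [fC_one]
  · rw [FF, if_neg (not_le.mpr h')]

lemma FF_reflect (t : ℝ) : FF (1 - t) = - FF t := by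
  rcases le_or_gt t (1/2) with h | h
  · rw [FF_left h, FF_right (by linarith : (1:ℝ)/2 ≤ 1 - t)]
    ring_nf
  · rw [FF_right h.le, FF_left (by linarith : 1 - t ≤ 1/2)]
    ring_nf

lemma FF_holder (s t : ℝ) : ‖FF s - FF t‖ ≤ 100 * Real.sqrt |s - t| := by
  have main : ∀ s t : ℝ, s ≤ t → ‖FF s - FF t‖ ≤ 100 * Real.sqrt |s - t| := by
    intro s t hst
    have h2 : |s - t| = t - s := by rw [abs_sub_comm, _root_.abs_of_nonneg (by linarith)]
    have sqrt2 : Real.sqrt 2 ≤ 2 := by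
      nlinarith [Real.sq_sqrt (by norm_num : (0:ℝ) ≤ 2), Real.sqrt_nonneg 2]
    have key2 : ∀ x : ℝ, 0 ≤ x → Real.sqrt (2*x) ≤ 2 * Real.sqrt x := by
      intro x hx
      rw [Real.sqrt_mul (by norm_num) x]
      nlinarith [Real.sqrt_nonneg x]
    rcases le_or_gt t (1/2) with h1 | h1
    · rw [FF_left (le_trans hst h1), FF_left h1]
      calc ‖fC (2*s) - fC (2*t)‖ ≤ 21 * Real.sqrt |2*s - 2*t| := fC_holder _ _
        _ ≤ 100 * Real.sqrt |s - t| := by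
          have : |2*s - 2*t| = 2 * |s - t| := by rw [show 2*s - 2*t = 2*(s-t) by ring, abs_mul]; norm_num
          rw [this]
          have := key2 |s - t| (abs_nonneg _)
          nlinarith [Real.sqrt_nonneg |s - t|]
    rcases le_or_gt (1/2) s with h0 | h0
    · rw [FF_right h0, FF_right h1.le]
      have : -fC (2-2*s) - -fC (2-2*t) = fC (2-2*t) - fC (2-2*s) := by ring
      rw [this]
      calc ‖fC (2-2*t) - fC (2-2*s)‖ ≤ 21 * Real.sqrt |(2-2*t) - (2-2*s)| := fC_holder _ _
        _ ≤ 100 * Real.sqrt |s - t| := by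
          have : |(2-2*t) - (2-2*s)| = 2 * |s - t| := by
            rw [show (2-2*t) - (2-2*s) = 2*(s-t) by ring, abs_mul]; norm_num
          rw [this]
          have := key2 |s - t| (abs_nonneg _)
          nlinarith [Real.sqrt_nonneg |s - t|]
    · -- s < 1/2 ≤ t
      rw [FF_left h0.le, FF_right h1.le]
      have e1 : ‖fC (2*s) - -fC (2-2*t)‖ ≤ ‖fC (2*s) - fC 1‖ + ‖fC (2-2*t) - fC 1‖ := by
        have : fC (2*s) - -fC (2-2*t) = (fC (2*s) - fC 1) + (fC (2-2*t) - fC 1) := by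
          rw [fC_one]; ring
        rw [this]
        exact norm_add_le _ _
      have b1 : ‖fC (2*s) - fC 1‖ ≤ 21 * Real.sqrt (2*(t-s)) := by
        calc ‖fC (2*s) - fC 1‖ ≤ 21 * Real.sqrt |2*s - 1| := fC_holder _ _
          _ ≤ 21 * Real.sqrt (2*(t-s)) := by
            apply mul_le_mul_of_nonneg_left (Real.sqrt_le_sqrt _) (by norm_num)
            rw [abs_sub_comm, _root_.abs_of_nonneg (by linarith)]
            linarith
      have b2 : ‖fC (2-2*t) - fC 1‖ ≤ 21 * Real.sqrt (2*(t-s)) := by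
        calc ‖fC (2-2*t) - fC 1‖ ≤ 21 * Real.sqrt |(2-2*t) - 1| := fC_holder _ _
          _ ≤ 21 * Real.sqrt (2*(t-s)) := by
            apply mul_le_mul_of_nonneg_left (Real.sqrt_le_sqrt _) (by norm_num)
            rw [abs_sub_comm, _root_.abs_of_nonneg (by linarith)]
            linarith
      have b3 : Real.sqrt (2*(t-s)) ≤ 2 * Real.sqrt |s - t| := by
        rw [h2]; exact key2 _ (by linarith)
      calc ‖fC (2*s) - -fC (2-2*t)‖ ≤ 21 * Real.sqrt (2*(t-s)) + 21 * Real.sqrt (2*(t-s)) := by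
            linarith
        _ = 42 * Real.sqrt (2*(t-s)) := by ring
        _ ≤ 42 * (2 * Real.sqrt |s - t|) := by
            apply mul_le_mul_of_nonneg_left b3 (by norm_num)
        _ ≤ 100 * Real.sqrt |s - t| := by nlinarith [Real.sqrt_nonneg |s - t|]
  rcases le_total s t with h | h
  · exact main s t h
  · rw [← norm_neg]
    have : -(FF s - FF t) = FF t - FF s := by ring
    rw [this, abs_sub_comm]
    exact main t s h

lemma gam_holder (s t : ℝ) : ‖gam s - gam t‖ ≤ 100 * Real.sqrt |s - t| := by
  rw [gam, gam, toE_sub, norm_toE]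
  exact FF_holder s t

lemma gam_cont : Continuous gam := by
  rw [Metric.continuous_iff]
  intro b ε hε
  refine ⟨(ε/100)^2, by positivity, fun a hab => ?_⟩
  rw [dist_eq_norm]
  calc ‖gam a - gam b‖ ≤ 100 * Real.sqrt |a - b| := gam_holder a b
    _ < 100 * (ε/100) := by
        apply mul_lt_mul_of_pos_left _ (by norm_num : (0:ℝ) < 100)
        have : |a - b| < (ε/100)^2 := by rw [← Real.dist_eq]; exact hab
        calc Real.sqrt |a - b| < Real.sqrt ((ε/100)^2) := Real.sqrt_lt_sqrt (abs_nonneg _) this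
          _ = ε/100 := Real.sqrt_sq (by positivity)
    _ = ε := by ring

lemma omega_gam (s t : ℝ) : omegaF 1 (gam s) (gam t) = w (FF s) (FF t) := omega_toE _ _

lemma dyadArea_gam (k : ℕ) : dyadArea gam k = 0 := by
  rw [dyadArea]
  have hzero : ∑ j ∈ Finset.range (2^k),
      omegaF 1 (gam ((j:ℝ)/2^k)) (gam (((j:ℝ)+1)/2^k)) = 0 := by
    set n := 2^k with hn
    have hnpos : 0 < n := Nat.pow_pos (by norm_num)
    have hnR : (0:ℝ) < (n:ℝ) := by exact_mod_cast hnpos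
    have hcast : ((n:ℕ):ℝ) = (2:ℝ)^k := by rw [hn]; push_cast; ring
    simp only [← hcast]
    have key : ∀ j, j < n →
        omegaF 1 (gam (((n-1-j : ℕ):ℝ)/n)) (gam ((((n-1-j : ℕ):ℝ)+1)/n))
          = - omegaF 1 (gam ((j:ℝ)/n)) (gam (((j:ℝ)+1)/n)) := by
      intro j hj
      have hc1 : ((n - 1 - j : ℕ) : ℝ) = (n:ℝ) - 1 - j := by
        have h1 : (n - 1 - j : ℕ) = n - (j+1) := by omega
        rw [h1, Nat.cast_sub (by omega : j + 1 ≤ n), Nat.cast_add, Nat.cast_one]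
        ring
      have hx : ((n - 1 - j : ℕ) : ℝ)/n = 1 - (((j:ℝ)+1)/n) := by
        rw [hc1]
        field_simp
        ring
      have hy : (((n - 1 - j : ℕ) : ℝ)+1)/n = 1 - ((j:ℝ)/n) := by
        rw [hc1]
        field_simp
        ring
      rw [hx, hy, omega_gam, omega_gam, FF_reflect, FF_reflect, w_neg_neg, w_antisymm]
    have hreflsum := Finset.sum_range_reflect
      (fun j => omegaF 1 (gam ((j:ℝ)/n)) (gam (((j:ℝ)+1)/n))) n
    have h2 : ∑ j ∈ Finset.range n,
        omegaF 1 (gam (((n-1-j : ℕ):ℝ)/n)) (gam ((((n-1-j : ℕ):ℝ)+1)/n))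
        = - ∑ j ∈ Finset.range n, omegaF 1 (gam ((j:ℝ)/n)) (gam (((j:ℝ)+1)/n)) := by
      rw [← Finset.sum_neg_distrib]
      exact Finset.sum_congr rfl (fun j hj => key j (Finset.mem_range.mp hj))
    have := hreflsum.symm.trans h2
    linarith [this]
  rw [hzero, mul_zero]



/-- dyadic discrete area of the base curve `fC` at level `m` (times no half yet) -/
def SS (m : ℕ) : ℝ :=
  (1/2) * ∑ j ∈ Finset.range (2^m), w (fC ((j:ℝ)/2^m)) (fC (((j:ℝ)+1)/2^m))

lemma ee_eq_one_iff (x : ℝ) : ee x = 1 ↔ ∃ n : ℤ, x = n := by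
  constructor
  · intro h
    rw [ee, Complex.exp_eq_one_iff] at h
    obtain ⟨n, hn⟩ := h
    have h2 : ((2 * Real.pi * x : ℝ) : ℂ) * Complex.I = ((2 * Real.pi * (n:ℝ) : ℝ) : ℂ) * Complex.I := by
      rw [hn]; push_cast; ring
    have h3 : ((2 * Real.pi * x : ℝ) : ℂ) = ((2 * Real.pi * (n:ℝ) : ℝ) : ℂ) :=
      mul_right_cancel₀ Complex.I_ne_zero h2
    have h4 : 2 * Real.pi * x = 2 * Real.pi * (n:ℝ) := by exact_mod_cast h3
    exact ⟨n, mul_left_cancel₀ (by positivity : (2 * Real.pi) ≠ 0) h4⟩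
  · rintro ⟨n, rfl⟩
    exact ee_int n

lemma ee_ne_one {c : ℤ} {m : ℕ} (h : ¬ ((2:ℤ)^m ∣ c)) : ee ((c:ℝ)/2^m) ≠ 1 := by
  intro hone
  rw [ee_eq_one_iff] at hone
  obtain ⟨n, hn⟩ := hone
  apply h
  have h2 : (c:ℝ) = (n:ℝ) * 2^m := by
    have hp : ((2:ℝ)^m) ≠ 0 := by positivity
    field_simp at hn
    linarith [hn]
  have h3 : c = n * 2^m := by exact_mod_cast h2
  exact ⟨n, by rw [h3]; ring⟩

lemma ee_pow_N {c : ℤ} {m : ℕ} : (ee ((c:ℝ)/2^m))^(2^m) = 1 := by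
  rw [ee_pow]
  have : ((2^m : ℕ) : ℝ) * ((c:ℝ)/2^m) = (c:ℝ) := by
    push_cast
    field_simp
  rw [this]
  exact ee_int c

lemma geo_zero {c : ℤ} {m : ℕ} (h : ¬ ((2:ℤ)^m ∣ c)) :
    ∑ j ∈ Finset.range (2^m), (ee ((c:ℝ)/2^m))^j = 0 := by
  rw [geom_sum_eq (ee_ne_one h) (2^m), ee_pow_N]
  simp

lemma not_dvd_pow4 {k m : ℕ} (hk : 2*k < m) : ¬ ((2:ℤ)^m ∣ ((4:ℤ)^k)) := by
  intro h
  have h4 : ((4:ℤ)^k) = ((4^k : ℕ) : ℤ) := by push_cast; ring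
  have h2 : ((2:ℤ)^m) = ((2^m : ℕ) : ℤ) := by push_cast; ring
  rw [h4, h2, Int.natCast_dvd_natCast] at h
  have : (4:ℕ)^k = 2^(2*k) := by rw [show (4:ℕ) = 2^2 by norm_num, ← pow_mul]
  rw [this] at h
  have := (Nat.pow_dvd_pow_iff_le_right (by norm_num : 1 < 2)).mp h
  omega

lemma not_dvd_sub4 {k l m : ℕ} (hk : 2*k < m) (hl : 2*l < m) (hkl : k < l) :
    ¬ ((2:ℤ)^m ∣ ((4:ℤ)^l - 4^k)) := by
  intro h
  have hle : (4:ℕ)^k ≤ 4^l := Nat.pow_le_pow_right (by norm_num) hkl.le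
  have hcast : ((4:ℤ)^l - 4^k) = (((4^l - 4^k : ℕ)) : ℤ) := by
    rw [Nat.cast_sub hle]; push_cast; ring
  have h2 : ((2:ℤ)^m) = ((2^m : ℕ) : ℤ) := by push_cast; ring
  rw [hcast, h2, Int.natCast_dvd_natCast] at h
  set d := l - k with hd
  have hd1 : 1 ≤ d := by omega
  have hfac : (4:ℕ)^l - 4^k = 4^k * (4^d - 1) := by
    have h1 : (4:ℕ)^l = 4^k * 4^d := by rw [← pow_add]; congr 1; omega
    rw [h1, Nat.mul_sub]
    simp
  rw [hfac] at h
  have hodd : Odd ((4:ℕ)^d - 1) := by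
    apply Nat.Even.sub_odd (Nat.one_le_pow _ _ (by norm_num))
    · rw [Nat.even_pow]
      exact ⟨⟨2, by norm_num⟩, by omega⟩
    · exact odd_one
  have hcop : Nat.Coprime (2^m) (4^d - 1) :=
    Nat.Coprime.pow_left m (Nat.coprime_two_left.mpr hodd)
  have h5 : (2:ℕ)^m ∣ 4^k := hcop.dvd_of_dvd_mul_right h
  have : (4:ℕ)^k = 2^(2*k) := by rw [show (4:ℕ) = 2^2 by norm_num, ← pow_mul]
  rw [this] at h5
  have := (Nat.pow_dvd_pow_iff_le_right (by norm_num : 1 < 2)).mp h5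
  omega

lemma not_int_ratio {k l m : ℕ} (hk : 2*k < m) (hl : 2*l < m) (hne : k ≠ l) :
    ee (((4:ℝ)^l - 4^k)/2^m) ≠ 1 := by
  have hcast : ((4:ℝ)^l - 4^k) = (((4:ℤ)^l - 4^k : ℤ) : ℝ) := by push_cast; ring
  rw [hcast]
  rcases Nat.lt_or_ge k l with hkl | hkl
  · exact ee_ne_one (not_dvd_sub4 hk hl hkl)
  · have hlk : l < k := by omega
    apply ee_ne_one
    intro hdvd
    exact not_dvd_sub4 hl hk hlk (by
      have := (dvd_neg).mpr hdvd
      simpa using this)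

lemma geo_zero' {c : ℤ} {m : ℕ} (hne : ee ((c:ℝ)/2^m) ≠ 1) :
    ∑ j ∈ Finset.range (2^m), (ee ((c:ℝ)/2^m))^j = 0 := by
  rw [geom_sum_eq hne (2^m), ee_pow_N]
  simp

/-- the inner character sum -/
lemma inner_eval {m k l : ℕ} (hk : 2*k < m) (hl : 2*l < m) :
    ∑ j ∈ Finset.range (2^m),
      ((ee (-((4:ℝ)^k/2^m)))^j - 1) * ((ee ((4:ℝ)^l/2^m))^(j+1) - 1)
    = (if k = l then (2^m : ℂ) * ee ((4:ℝ)^k/2^m) else 0) + (2^m : ℂ) := by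
  set η := ee (-((4:ℝ)^k/2^m)) with hη
  set ξ := ee ((4:ℝ)^l/2^m) with hξ
  have expand : ∀ j : ℕ, (η^j - 1) * (ξ^(j+1) - 1)
      = ξ * (η*ξ)^j - η^j - ξ * ξ^j + 1 := by
    intro j
    rw [mul_pow, pow_succ]
    ring
  rw [Finset.sum_congr rfl (fun j _ => expand j)]
  have hsplit : ∑ j ∈ Finset.range (2^m), (ξ * (η*ξ)^j - η^j - ξ * ξ^j + 1)
      = ξ * (∑ j ∈ Finset.range (2^m), (η*ξ)^j) - (∑ j ∈ Finset.range (2^m), η^j)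
        - ξ * (∑ j ∈ Finset.range (2^m), ξ^j) + (2^m : ℂ) := by
    rw [Finset.sum_add_distrib, Finset.sum_sub_distrib, Finset.sum_sub_distrib,
      Finset.mul_sum, Finset.mul_sum]
    simp
  rw [hsplit]
  -- η sum
  have hηc : η = ee (((-(4:ℤ)^k : ℤ) : ℝ)/2^m) := by rw [hη]; congr 1; push_cast; ring
  have hη0 : (∑ j ∈ Finset.range (2^m), η^j) = 0 := by
    rw [hηc]
    exact geo_zero (by simpa using not_dvd_pow4 hk)
  have hξc : ξ = ee ((((4:ℤ)^l : ℤ) : ℝ)/2^m) := by rw [hξ]; congr 1; push_cast; ring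
  have hξ0 : (∑ j ∈ Finset.range (2^m), ξ^j) = 0 := by
    rw [hξc]
    exact geo_zero (not_dvd_pow4 hl)
  rw [hη0, hξ0]
  rcases eq_or_ne k l with rfl | hne
  · have hprod : η * ξ = 1 := by
      rw [hη, hξ, ← ee_add]
      norm_num
      exact ee_zero
    rw [hprod]
    simp [if_pos rfl]
    ring
  · have hprod : η * ξ = ee (((4:ℝ)^l - 4^k)/2^m) := by
      rw [hη, hξ, ← ee_add]
      congr 1
      ring
    have hprod0 : (∑ j ∈ Finset.range (2^m), (η*ξ)^j) = 0 := by
      rw [hprod]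
      have hcast : (((4:ℝ)^l - 4^k)/2^m) = ((((4:ℤ)^l - 4^k : ℤ)
           : ℝ)/2^m) := by push_cast; ring
      rw [hcast]
      apply geo_zero'
      rw [← hcast]
      exact not_int_ratio hk hl hne
    rw [hprod0]
    simp [if_neg hne]





lemma u_form (m j : ℕ) : fC ((j:ℝ)/2^m)
    = ∑ k ∈ Finset.range ((m+1)/2), (((1/2:ℝ)^k : ℝ):ℂ) * ((ee ((4:ℝ)^k/2^m))^j - 1) := by
  rw [fC_dyadic]
  refine Finset.sum_congr rfl (fun k _ => ?_)
  rw [trm, ee_pow]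
  congr 2
  push_cast
  ring

lemma conj_u (m j : ℕ) : (starRingEnd ℂ) (fC ((j:ℝ)/2^m))
    = ∑ k ∈ Finset.range ((m+1)/2), (((1/2:ℝ)^k : ℝ):ℂ) * ((ee (-((4:ℝ)^k/2^m)))^j - 1) := by
  rw [u_form, map_sum]
  refine Finset.sum_congr rfl (fun k _ => ?_)
  rw [map_mul, Complex.conj_ofReal, map_sub, map_one, map_pow, ee_conj]

lemma SS_closed (m : ℕ) :
    SS m = (1/2) * 2^m *
      ∑ k ∈ Finset.range ((m+1)/2), (1/4:ℝ)^k * Real.sin (2*Real.pi*((4:ℝ)^k/2^m)) := by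
  have hR : ∀ k ∈ Finset.range ((m+1)/2), 2*k < m := by
    intro k hk
    have := Finset.mem_range.mp hk
    omega
  -- step 1 : write SS as the imaginary part of a complex sum
  have step1 : SS m = (1/2) *
      (∑ j ∈ Finset.range (2^m),
        (starRingEnd ℂ) (fC ((j:ℝ)/2^m)) * fC (((j+1:ℕ):ℝ)/2^m)).im := by
    rw [SS, Complex.im_sum]
    congr 1
    refine Finset.sum_congr rfl (fun j _ => ?_)
    rw [w]
    congr 3
    push_cast
    ring
  rw [step1]
  -- step 2+3 : expand and swap
  have step2 : ∑ j ∈ Finset.range (2^m),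
      (starRingEnd ℂ) (fC ((j:ℝ)/2^m)) * fC (((j+1:ℕ):ℝ)/2^m)
      = ∑ k ∈ Finset.range ((m+1)/2), ∑ l ∈ Finset.range ((m+1)/2),
          ((((1/2:ℝ)^k : ℝ):ℂ) * (((1/2:ℝ)^l : ℝ):ℂ)) *
          ∑ j ∈ Finset.range (2^m),
            ((ee (-((4:ℝ)^k/2^m)))^j - 1) * ((ee ((4:ℝ)^l/2^m))^(j+1) - 1) := by
    have hj : ∀ j : ℕ, (starRingEnd ℂ) (fC ((j:ℝ)/2^m)) * fC (((j+1:ℕ):ℝ)/2^m)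
        = ∑ k ∈ Finset.range ((m+1)/2), ∑ l ∈ Finset.range ((m+1)/2),
            ((((1/2:ℝ)^k : ℝ):ℂ) * (((1/2:ℝ)^l : ℝ):ℂ)) *
            (((ee (-((4:ℝ)^k/2^m)))^j - 1) * ((ee ((4:ℝ)^l/2^m))^(j+1) - 1)) := by
      intro j
      rw [conj_u, u_form m (j+1), Finset.sum_mul_sum]
      refine Finset.sum_congr rfl (fun k _ => Finset.sum_congr rfl (fun l _ => ?_))
      ring
    rw [Finset.sum_congr rfl (fun j _ => hj j)]
    rw [Finset.sum_comm]
    refine Finset.sum_congr rfl (fun k _ => ?_)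
    rw [Finset.sum_comm]
    refine Finset.sum_congr rfl (fun l _ => ?_)
    rw [Finset.mul_sum]
  rw [step2]
  -- step 4 : evaluate the inner sums
  have step4 : ∀ k ∈ Finset.range ((m+1)/2), ∀ l ∈ Finset.range ((m+1)/2),
      ((((1/2:ℝ)^k : ℝ):ℂ) * (((1/2:ℝ)^l : ℝ):ℂ)) *
        ∑ j ∈ Finset.range (2^m),
          ((ee (-((4:ℝ)^k/2^m)))^j - 1) * ((ee ((4:ℝ)^l/2^m))^(j+1) - 1)
      = ((((1/2:ℝ)^k : ℝ):ℂ) * (((1/2:ℝ)^l : ℝ):ℂ)) *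
          ((if k = l then (2^m : ℂ) * ee ((4:ℝ)^k/2^m) else 0) + (2^m : ℂ)) := by
    intro k hk l hl
    rw [inner_eval (hR k hk) (hR l hl)]
  rw [Finset.sum_congr rfl (fun k hk => Finset.sum_congr rfl (fun l hl => step4 k hk l hl))]
  -- step 5 : split diagonal and constant parts
  have step5 : ∑ k ∈ Finset.range ((m+1)/2), ∑ l ∈ Finset.range ((m+1)/2),
      ((((1/2:ℝ)^k : ℝ):ℂ) * (((1/2:ℝ)^l : ℝ):ℂ)) *
        ((if k = l then (2^m : ℂ) * ee ((4:ℝ)^k/2^m) else 0) + (2^m : ℂ))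
      = (∑ k ∈ Finset.range ((m+1)/2),
          ((((1/2:ℝ)^k : ℝ):ℂ) * (((1/2:ℝ)^k : ℝ):ℂ)) * (2^m : ℂ) * ee ((4:ℝ)^k/2^m))
        + ((2^m : ℂ) * (∑ k ∈ Finset.range ((m+1)/2), (((1/2:ℝ)^k : ℝ):ℂ))
            * (∑ l ∈ Finset.range ((m+1)/2), (((1/2:ℝ)^l : ℝ):ℂ))) := by
    have expand : ∀ k ∈ Finset.range ((m+1)/2), ∀ l ∈ Finset.range ((m+1)/2),
        ((((1/2:ℝ)^k : ℝ):ℂ) * (((1/2:ℝ)^l : ℝ):ℂ)) *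
          ((if k = l then (2^m : ℂ) * ee ((4:ℝ)^k/2^m) else 0) + (2^m : ℂ))
        = (if k = l then ((((1/2:ℝ)^k : ℝ):ℂ) * (((1/2:ℝ)^k : ℝ):ℂ)) * (2^m : ℂ) * ee ((4:ℝ)^k/2^m) else 0)
          + ((((1/2:ℝ)^k : ℝ):ℂ) * (((1/2:ℝ)^l : ℝ):ℂ)) * (2^m : ℂ) := by
      intro k _ l _
      rcases eq_or_ne k l with rfl | hne
      · simp only [eq_self_iff_true, if_true]
        ring
      · simp only [if_neg hne]
        ring
    rw [Finset.sum_congr rfl (fun k hk => Finset.sum_congr rfl (fun l hl => expand k hk l hl))]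
    have inner : ∀ k ∈ Finset.range ((m+1)/2),
        ∑ l ∈ Finset.range ((m+1)/2),
          ((if k = l then ((((1/2:ℝ)^k : ℝ):ℂ) * (((1/2:ℝ)^k : ℝ):ℂ)) * (2^m : ℂ) * ee ((4:ℝ)^k/2^m) else 0)
            + ((((1/2:ℝ)^k : ℝ):ℂ) * (((1/2:ℝ)^l : ℝ):ℂ)) * (2^m : ℂ))
        = ((((1/2:ℝ)^k : ℝ):ℂ) * (((1/2:ℝ)^k : ℝ):ℂ)) * (2^m : ℂ) * ee ((4:ℝ)^k/2^m)
          + (((1/2:ℝ)^k : ℝ):ℂ) * (2^m : ℂ) * (∑ l ∈ Finset.range ((m+1)/2), (((1/2:ℝ)^l : ℝ):ℂ)) := by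
      intro k hk
      rw [Finset.sum_add_distrib, Finset.sum_ite_eq (Finset.range ((m+1)/2)) k, if_pos hk]
      congr 1
      rw [Finset.mul_sum]
      refine Finset.sum_congr rfl (fun l _ => ?_)
      ring
    rw [Finset.sum_congr rfl inner, Finset.sum_add_distrib]
    congr 1
    have h6 : ∀ k ∈ Finset.range ((m+1)/2),
        (((1/2:ℝ)^k : ℝ):ℂ) * (2^m : ℂ) * (∑ l ∈ Finset.range ((m+1)/2), (((1/2:ℝ)^l : ℝ):ℂ))
        = (((1/2:ℝ)^k : ℝ):ℂ) * ((2^m : ℂ) * (∑ l ∈ Finset.range ((m+1)/2), (((1/2:ℝ)^l : ℝ):ℂ))) := by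
      intro k _
      ring
    rw [Finset.sum_congr rfl h6, ← Finset.sum_mul]
    ring
  rw [step5]
  -- step 6 : take imaginary parts
  rw [Complex.add_im]
  have im2 : ((2^m : ℂ) * (∑ k ∈ Finset.range ((m+1)/2), (((1/2:ℝ)^k : ℝ):ℂ))
      * (∑ l ∈ Finset.range ((m+1)/2), (((1/2:ℝ)^l : ℝ):ℂ))).im = 0 := by
    have h1 : (∑ k ∈ Finset.range ((m+1)/2), (((1/2:ℝ)^k : ℝ):ℂ))
        = ((∑ k ∈ Finset.range ((m+1)/2), (1/2:ℝ)^k : ℝ) : ℂ) := by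
      rw [Complex.ofReal_sum]
    rw [h1]
    have h2 : ((2:ℂ)^m) = (((2:ℝ)^m : ℝ) : ℂ) := by push_cast; ring
    rw [h2, ← Complex.ofReal_mul, ← Complex.ofReal_mul]
    exact Complex.ofReal_im _
  rw [im2, add_zero, Complex.im_sum]
  have im1 : ∀ k ∈ Finset.range ((m+1)/2),
      (((((1/2:ℝ)^k : ℝ):ℂ) * (((1/2:ℝ)^k : ℝ):ℂ)) * (2^m : ℂ) * ee ((4:ℝ)^k/2^m)).im
      = 2^m * ((1/4:ℝ)^k * Real.sin (2*Real.pi*((4:ℝ)^k/2^m))) := by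
    intro k _
    have h2 : ((2:ℂ)^m) = (((2:ℝ)^m : ℝ) : ℂ) := by push_cast; ring
    rw [h2, ← Complex.ofReal_mul, ← Complex.ofReal_mul]
    rw [Complex.im_ofReal_mul]
    have him : (ee ((4:ℝ)^k/2^m)).im = Real.sin (2*Real.pi*((4:ℝ)^k/2^m)) := ee_im _
    rw [him]
    have ha : (1/2:ℝ)^k * (1/2:ℝ)^k = (1/4:ℝ)^k := by
      rw [← mul_pow]
      norm_num
    rw [ha]
    ring
  rw [Finset.sum_congr rfl im1]
  rw [← Finset.mul_sum]
  ring





lemma SS_step (m : ℕ) :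
    SS (m+2) = SS m + (1/2) * 2^(m+2) * Real.sin (2*Real.pi/2^(m+2)) := by
  rw [SS_closed, SS_closed]
  have hidx : (m+2+1)/2 = (m+1)/2 + 1 := by omega
  rw [hidx, Finset.sum_range_succ']
  have hterm : ∀ k : ℕ, (1/4:ℝ)^(k+1) * Real.sin (2*Real.pi*((4:ℝ)^(k+1)/2^(m+2)))
      = (1/4:ℝ) * ((1/4:ℝ)^k * Real.sin (2*Real.pi*((4:ℝ)^k/2^m))) := by
    intro k
    have harg : (4:ℝ)^(k+1)/2^(m+2) = (4:ℝ)^k/2^m := by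
      rw [pow_succ, pow_add]
      field_simp
      ring
    rw [harg, pow_succ]
    ring
  rw [Finset.sum_congr rfl (fun k _ => hterm k)]
  rw [← Finset.mul_sum]
  have hz : (1/4:ℝ)^(0:ℕ) * Real.sin (2*Real.pi*((4:ℝ)^(0:ℕ)/2^(m+2)))
      = Real.sin (2*Real.pi/2^(m+2)) := by
    norm_num
    rw [div_eq_mul_inv]
  rw [hz]
  have hp : (2:ℝ)^(m+2) = 4 * 2^m := by rw [pow_add]; ring
  rw [hp]
  ring

lemma SS_gap (m : ℕ) : 2 ≤ (1/2) * 2^(m+2) * Real.sin (2*Real.pi/2^(m+2)) := by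
  set θ : ℝ := 2*Real.pi/2^(m+2) with hθ
  have hpi := Real.pi_pos
  have hppos : (0:ℝ) < 2^(m+2) := by positivity
  have hθpos : 0 < θ := by rw [hθ]; positivity
  have hθle : θ ≤ Real.pi/2 := by
    rw [hθ, div_le_div_iff₀ hppos (by norm_num)]
    have h4 : (4:ℝ) ≤ 2^(m+2) := by
      calc (4:ℝ) = 2^2 := by norm_num
        _ ≤ 2^(m+2) := by
          apply pow_le_pow_right₀ (by norm_num)
          omega
    nlinarith
  have := Real.mul_le_sin hθpos.le hθle
  -- 2/π * θ ≤ sin θ  with  θ = 2π/2^(m+2)  gives  4/2^(m+2) ≤ sin θ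
  have h2 : 2/Real.pi * θ = 4/2^(m+2) := by
    rw [hθ]
    field_simp
    ring
  rw [h2] at this
  calc (2:ℝ) = (1/2) * 2^(m+2) * (4/2^(m+2)) := by field_simp; ring
    _ ≤ (1/2) * 2^(m+2) * Real.sin θ := by
        apply mul_le_mul_of_nonneg_left this (by positivity)




lemma SHat_range (γ : ℝ → E 1) (k : ℕ) (p : ℕ → ℝ) :
    SHat 1 γ k (fun i : Fin (k+1) => p i) =
      (1/2) * ∑ i ∈ Finset.range k, omegaF 1 (γ (p i)) (γ (p (i+1))) := by
  rw [SHat]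
  congr 1
  rw [← Fin.sum_univ_eq_sum_range (fun i => omegaF 1 (γ (p i)) (γ (p (i+1)))) k]
  refine Finset.sum_congr rfl (fun i _ => ?_)
  simp [Fin.coe_castSucc, Fin.val_succ]

/-- the dyadic partition of level kk, as SHat -/
lemma SHat_dyadic (kk : ℕ) :
    SHat 1 gam (2^kk) (fun i : Fin (2^kk+1) => (i:ℝ)/2^kk) = dyadArea gam kk := by
  have h := SHat_range gam (2^kk) (fun i : ℕ => (i:ℝ)/2^kk)
  rw [h, dyadArea]
  congr 1
  refine Finset.sum_congr rfl (fun j _ => ?_)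
  congr 2
  push_cast
  ring

/- ### the bad partitions -/

def pt (m i : ℕ) : ℝ := if i ≤ 2^m then (i:ℝ)/2^(m+1) else ((i:ℝ) + 2^m)/2^(m+2)

lemma pt_zero (m : ℕ) : pt m 0 = 0 := by
  rw [pt, if_pos (Nat.zero_le _)]
  simp

lemma pt_last (m : ℕ) : pt m (3*2^m) = 1 := by
  rw [pt, if_neg (by have := Nat.one_le_two_pow (n := m); omega : ¬ 3*2^m ≤ 2^m)]
  have : ((3*2^m : ℕ):ℝ) + 2^m = 2^(m+2) := by
    push_cast
    rw [pow_add]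
    ring
  rw [this]
  field_simp

lemma pt_gap (m i : ℕ) : 0 < pt m (i+1) - pt m i ∧ pt m (i+1) - pt m i ≤ 1/2^(m+1) := by
  have h1 : (0:ℝ) < 2^(m+1) := by positivity
  have h2 : (0:ℝ) < 2^(m+2) := by positivity
  have hle : (1:ℝ)/2^(m+2) ≤ 1/2^(m+1) := by
    apply div_le_div_of_nonneg_left (by norm_num) h1
    apply pow_le_pow_right₀ (by norm_num)
    omega
  rcases le_or_gt (i+1) (2^m) with hc | hc
  · have hdiff : pt m (i+1) - pt m i = 1/2^(m+1) := by
      rw [pt, pt, if_pos hc, if_pos (by omega)]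
      push_cast
      rw [div_sub_div_same]
      congr 1
      ring
    rw [hdiff]
    exact ⟨by positivity, le_refl _⟩
  · rcases le_or_gt i (2^m) with hc2 | hc2
    · have hie : i = 2^m := by omega
      subst hie
      have hdiff : pt m (2^m+1) - pt m (2^m) = 1/2^(m+2) := by
        rw [pt, pt, if_neg (by omega), if_pos le_rfl]
        push_cast
        rw [pow_add, pow_add]
        field_simp
        ring
      rw [hdiff]
      exact ⟨by positivity, hle⟩
    · have hdiff : pt m (i+1) - pt m i = 1/2^(m+2) := by
        rw [pt, pt, if_neg (by omega), if_neg (by omega)]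
        push_cast
        rw [div_sub_div_same]
        congr 1
        ring
      rw [hdiff]
      exact ⟨by positivity, hle⟩

lemma pt_left (m i : ℕ) (h : i ≤ 2^m) : gam (pt m i) = toE (fC ((i:ℝ)/2^m)) := by
  rw [pt, if_pos h, gam]
  congr 1
  have hhalf : ((i:ℝ))/2^(m+1) ≤ 1/2 := by
    rw [div_le_div_iff₀ (by positivity) (by norm_num)]
    have : ((i:ℝ)) ≤ 2^m := by exact_mod_cast h
    rw [pow_add]
    nlinarith
  rw [FF_left hhalf]
  congr 1
  rw [pow_add]
  field_simp

lemma pt_right (m j : ℕ) (h : j ≤ 2^(m+1)) :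
    gam (pt m (2^m + j)) = toE (-fC (((2^(m+1) - j : ℕ):ℝ)/2^(m+1))) := by
  rcases Nat.eq_zero_or_pos j with rfl | hj
  · have hv : pt m (2^m + 0) = 1/2 := by
      rw [pt, if_pos (by omega)]
      push_cast
      rw [pow_add]
      field_simp
      try ring
    rw [hv, gam]
    have hFF : FF (1/2) = 0 := by
      rw [FF_left le_rfl, show (2:ℝ)*(1/2) = ((1:ℕ):ℝ) by norm_num, fC_nat]
    rw [hFF]
    have h2 : ((2^(m+1) - 0 : ℕ):ℝ)/2^(m+1) = ((1:ℕ):ℝ) := by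
      push_cast
      field_simp
      simp
    rw [h2, fC_nat]
    all_goals norm_num
  · have hgt : (1:ℝ)/2 ≤ (((2^m + j:ℕ):ℝ) + 2^m)/2^(m+2) := by
      rw [div_le_div_iff₀ (by norm_num) (by positivity)]
      push_cast
      rw [pow_add]
      have : (1:ℝ) ≤ (j:ℝ) := by exact_mod_cast hj
      nlinarith
    have hcast : ((2^(m+1) - j : ℕ):ℝ) = 2^(m+1) - (j:ℝ) := by
      rw [Nat.cast_sub h]
      push_cast
      ring
    have harg : (2:ℝ) - 2*((((2^m + j:ℕ):ℝ) + 2^m)/2^(m+2))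
        = ((2^(m+1) - j : ℕ):ℝ)/2^(m+1) := by
      rw [hcast]
      push_cast
      rw [pow_add, pow_add]
      field_simp
      ring
    rw [pt, if_neg (by omega), gam, FF_right hgt, harg]

lemma SHat_bad (m : ℕ) :
    SHat 1 gam (3*2^m) (fun i : Fin (3*2^m+1) => pt m i) = SS m - SS (m+1) := by
  have h := SHat_range gam (3*2^m) (pt m)
  rw [h]
  have hsplit : ∑ i ∈ Finset.range (3*2^m), omegaF 1 (gam (pt m i)) (gam (pt m (i+1)))
      = (∑ i ∈ Finset.range (2^m), omegaF 1 (gam (pt m i)) (gam (pt m (i+1))))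
        + ∑ j ∈ Finset.range (2^(m+1)), omegaF 1 (gam (pt m (2^m + j))) (gam (pt m (2^m + j + 1))) := by
    have h3 : 3*2^m = 2^m + 2^(m+1) := by rw [pow_add]; ring
    rw [h3]
    rw [Finset.range_eq_Ico, ← Finset.sum_Ico_consecutive _ (Nat.zero_le (2^m)) (by omega : 2^m ≤ 2^m + 2^(m+1))]
    congr 1
    · rw [Finset.range_eq_Ico]
    rw [Finset.sum_Ico_eq_sum_range]
    have : 2^m + 2^(m+1) - 2^m = 2^(m+1) := by omega
    rw [this, Finset.range_eq_Ico]
  rw [hsplit]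
  -- left part
  have hleft : ∑ i ∈ Finset.range (2^m), omegaF 1 (gam (pt m i)) (gam (pt m (i+1)))
      = ∑ i ∈ Finset.range (2^m), w (fC ((i:ℝ)/2^m)) (fC (((i:ℝ)+1)/2^m)) := by
    refine Finset.sum_congr rfl (fun i hi => ?_)
    have hi' := Finset.mem_range.mp hi
    rw [pt_left m i (by omega), pt_left m (i+1) (by omega), omega_toE]
    congr 2
    push_cast
    ring
  -- right part
  have hright : ∑ j ∈ Finset.range (2^(m+1)), omegaF 1 (gam (pt m (2^m + j))) (gam (pt m (2^m + j + 1)))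
      = - ∑ j ∈ Finset.range (2^(m+1)), w (fC ((j:ℝ)/2^(m+1))) (fC (((j:ℝ)+1)/2^(m+1))) := by
    have hterm : ∀ j ∈ Finset.range (2^(m+1)),
        omegaF 1 (gam (pt m (2^m + j))) (gam (pt m (2^m + j + 1)))
        = w (fC (((2^(m+1) - j : ℕ):ℝ)/2^(m+1))) (fC (((2^(m+1) - (j+1) : ℕ):ℝ)/2^(m+1))) := by
      intro j hj
      have hj' := Finset.mem_range.mp hj
      have e1 := pt_right m j (by omega)
      have e2 := pt_right m (j+1) (by omega)
      rw [show 2^m + j + 1 = 2^m + (j+1) from by ring, e1, e2, omega_toE, w_neg_neg]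
    rw [Finset.sum_congr rfl hterm]
    -- reindex by reflection
    have hrefl := Finset.sum_range_reflect
      (fun j => w (fC (((j+1:ℕ):ℝ)/2^(m+1))) (fC ((j:ℝ)/2^(m+1)))) (2^(m+1))
    have hmatch : ∀ j ∈ Finset.range (2^(m+1)),
        w (fC (((2^(m+1) - j : ℕ):ℝ)/2^(m+1))) (fC (((2^(m+1) - (j+1) : ℕ):ℝ)/2^(m+1)))
        = w (fC (((2^(m+1) - 1 - j + 1:ℕ):ℝ)/2^(m+1))) (fC (((2^(m+1) - 1 - j : ℕ):ℝ)/2^(m+1))) := by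
      intro j hj
      have hj' := Finset.mem_range.mp hj
      have c1 : (2^(m+1) - j : ℕ) = (2^(m+1) - 1 - j + 1 : ℕ) := by omega
      have c2 : (2^(m+1) - (j+1) : ℕ) = (2^(m+1) - 1 - j : ℕ) := by omega
      rw [c1, c2]
    rw [Finset.sum_congr rfl hmatch, hrefl]
    rw [← Finset.sum_neg_distrib]
    refine Finset.sum_congr rfl (fun j hj => ?_)
    rw [← w_antisymm]
    congr 2
    push_cast
    ring
  rw [hleft, hright, SS, SS]
  ring


end HH

/-- **A `½`-Hölder curve whose dyadic approximations all have zero signed area but whose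
signed area does not exist** (Lemma B.5).  There are `C > 0` and a continuous curve
`γ : [0,1] → ℝ²` with `|γ(s) − γ(t)| ≤ C √|s−t|` such that `A_{𝒫_k}(γ) = 0` for all `k`,
yet the signed area `A(γ)` does not exist. -/
theorem half_holder_no_signed_area :
    ∃ (C : ℝ) (γ : ℝ → E 1), 0 < C ∧
      ContinuousOn γ (Icc (0 : ℝ) 1) ∧
      (∀ s ∈ Icc (0 : ℝ) 1, ∀ t ∈ Icc (0 : ℝ) 1,
        ‖γ s - γ t‖ ≤ C * Real.sqrt |s - t|) ∧
      (∀ k : ℕ, dyadArea γ k = 0) ∧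
      ¬ ∃ A : ℝ, IsSympArea 1 0 1 γ A := by
  refine ⟨100, HH.gam, by norm_num, HH.gam_cont.continuousOn,
    fun s _ t _ => HH.gam_holder s t, fun k => HH.dyadArea_gam k, ?_⟩
  rintro ⟨A, hA⟩
  have half_pow : ∀ n : ℕ, ((1:ℝ)/2)^n = 1/2^n := by
    intro n
    rw [div_pow, one_pow]
  -- step 1 : A = 0
  have hA0 : A = 0 := by
    by_contra hne
    obtain ⟨δ, hδ, hp⟩ := hA |A| (abs_pos.mpr hne)
    obtain ⟨kk, hkk⟩ := exists_pow_lt_of_lt_one hδ (by norm_num : (1/2:ℝ) < 1)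
    rw [half_pow] at hkk
    have hpow : (0:ℝ) < 2^kk := by positivity
    have happ := hp (2^kk) (fun i : Fin (2^kk+1) => ((i:ℕ):ℝ)/2^kk)
      (by simp)
      (by
        simp only [Fin.val_last]
        push_cast
        field_simp)
      (by
        intro i
        simp only [Fin.coe_castSucc, Fin.val_succ]
        rw [div_lt_div_iff_of_pos_right hpow]
        push_cast
        linarith)
      (by
        intro i
        simp only [Fin.coe_castSucc, Fin.val_succ]
        push_cast
        rw [div_sub_div_same]
        have : ((i:ℕ):ℝ) + 1 - (i:ℕ) = 1 := by ring
        rw [this]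
        exact hkk)
    rw [HH.SHat_dyadic, HH.dyadArea_gam, zero_sub, abs_neg] at happ
    exact lt_irrefl _ happ
  -- step 2 : contradiction with the bad partitions
  obtain ⟨δ, hδ, hp⟩ := hA 1 one_pos
  obtain ⟨m, hm⟩ := exists_pow_lt_of_lt_one hδ (by norm_num : (1/2:ℝ) < 1)
  rw [half_pow] at hm
  have hmono : ∀ n : ℕ, m ≤ n → (1:ℝ)/2^n < δ := by
    intro n hn
    refine lt_of_le_of_lt ?_ hm
    apply div_le_div_of_nonneg_left (by norm_num) (by positivity)
    apply pow_le_pow_right₀ (by norm_num) hn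
  have hbad : ∀ mm : ℕ, (1:ℝ)/2^(mm+1) < δ → |HH.SS mm - HH.SS (mm+1)| < 1 := by
    intro mm hmm
    have happ := hp (3*2^mm) (fun i : Fin (3*2^mm+1) => HH.pt mm i)
      (by
        show HH.pt mm ((0 : Fin (3*2^mm+1)) : ℕ) = 0
        rw [Fin.val_zero]
        exact HH.pt_zero mm)
      (by
        show HH.pt mm ((Fin.last (3*2^mm)) : ℕ) = 1
        rw [Fin.val_last]
        exact HH.pt_last mm)
      (by
        intro i
        show HH.pt mm (i.castSucc : ℕ) < HH.pt mm (i.succ : ℕ)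
        rw [Fin.coe_castSucc, Fin.val_succ]
        linarith [(HH.pt_gap mm i).1])
      (by
        intro i
        show HH.pt mm (i.succ : ℕ) - HH.pt mm (i.castSucc : ℕ) < δ
        rw [Fin.coe_castSucc, Fin.val_succ]
        linarith [(HH.pt_gap mm i).2])
    rw [HH.SHat_bad, hA0, sub_zero] at happ
    exact happ
  have h1 : |HH.SS m - HH.SS (m+1)| < 1 := hbad m (hmono (m+1) (by omega))
  have h2 : |HH.SS (m+1) - HH.SS (m+2)| < 1 := hbad (m+1) (hmono (m+2) (by omega))
  have hstep := HH.SS_step m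
  have hgap := HH.SS_gap m
  have htri := abs_sub_le (HH.SS m) (HH.SS (m+1)) (HH.SS (m+2))
  have heq : |HH.SS m - HH.SS (m+2)|
      = (1/2) * 2^(m+2) * Real.sin (2*Real.pi/2^(m+2)) := by
    rw [hstep]
    rw [show HH.SS m - (HH.SS m + (1/2) * 2^(m+2) * Real.sin (2*Real.pi/2^(m+2)))
        = -((1/2) * 2^(m+2) * Real.sin (2*Real.pi/2^(m+2))) from by ring]
    rw [abs_neg, _root_.abs_of_nonneg (by linarith)]
  linarith
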